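/- Let W: X→Y and V: X→Z be two discrete memoryless channels with common finite input alphabet such that W is less noisy than V. Fix an input distribution on X, let X_1,…,X_N (N = 2^k) be i.i.d. copies of X, and let Y_i (respectively Z_i) be the output of channel W (respectively V) applied independently to X_i for each i. Let G_k be the k-th Kronecker power over GF(2) of [[1,0],[1,1]] and define U_1^N = X_1^N · G_k over GF(2). Then for every ε ∈ (0,1), 𝒟_ε^N(X|Z) ⊆ 𝒟_ε^N(X|Y), where 𝒟_ε^N(X|Y) = {i : H(U_i | U_1^{i−1}, Y_1^N) ≤ ε} and 𝒟_ε^N(X|Z) = {i : H(U_i | U_1^{i−1}, Z_1^N) ≤ ε}. -/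
import Mathlib


open scoped BigOperators
open Finset

namespace JWOM

/-- `p` is a probability mass function on the finite type `Ω`. -/
def IsPMF {Ω : Type*} [Fintype Ω] (p : Ω → ℝ) : Prop :=
  (∀ ω, 0 ≤ p ω) ∧ ∑ ω, p ω = 1

/-- Marginal pmf of the random variable `X` under the pmf `p`. -/
noncomputable def margin {Ω α : Type*} [Fintype Ω] [Fintype α] [DecidableEq α]
    (p : Ω → ℝ) (X : Ω → α) : α → ℝ :=
  fun a => ∑ ω, if X ω = a then p ω else 0

/-- Shannon entropy (base 2) of the random variable `X` under the pmf `p`. -/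
noncomputable def ent {Ω α : Type*} [Fintype Ω] [Fintype α] [DecidableEq α]
    (p : Ω → ℝ) (X : Ω → α) : ℝ :=
  ∑ a, -(margin p X a * Real.logb 2 (margin p X a))

/-- Conditional Shannon entropy `H(X|Y)` (base 2). -/
noncomputable def condEnt {Ω α β : Type*} [Fintype Ω] [Fintype α] [DecidableEq α]
    [Fintype β] [DecidableEq β] (p : Ω → ℝ) (X : Ω → α) (Y : Ω → β) : ℝ :=
  ent p (fun ω => (X ω, Y ω)) - ent p Y

/-- Mutual information `I(X;Y)` (base 2). -/
noncomputable def mutInfo {Ω α β : Type*} [Fintype Ω] [Fintype α] [DecidableEq α]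
    [Fintype β] [DecidableEq β] (p : Ω → ℝ) (X : Ω → α) (Y : Ω → β) : ℝ :=
  ent p X + ent p Y - ent p (fun ω => (X ω, Y ω))

/-- Conditional mutual information `I(X;Y|Z)` (base 2). -/
noncomputable def condMutInfo {Ω α β γ : Type*} [Fintype Ω] [Fintype α] [DecidableEq α]
    [Fintype β] [DecidableEq β] [Fintype γ] [DecidableEq γ]
    (p : Ω → ℝ) (X : Ω → α) (Y : Ω → β) (Z : Ω → γ) : ℝ :=
  condEnt p X Z - condEnt p X (fun ω => (Y ω, Z ω))

/-- The Markov chain `Z → X → T`: `Z` and `T` are conditionally independent given `X`. -/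
def Markov {Ω ζ 𝒳 τ : Type*} [Fintype Ω] [Fintype ζ] [DecidableEq ζ]
    [Fintype 𝒳] [DecidableEq 𝒳] [Fintype τ] [DecidableEq τ]
    (p : Ω → ℝ) (Z : Ω → ζ) (X : Ω → 𝒳) (T : Ω → τ) : Prop :=
  ∀ z x t, margin p (fun ω => (Z ω, X ω, T ω)) (z, x, t) * margin p X x =
    margin p (fun ω => (Z ω, X ω)) (z, x) * margin p (fun ω => (X ω, T ω)) (x, t)
open Matrix Kronecker

/-- The `k`-th Kronecker power over GF(2) of the polar kernel `[[1,0],[1,1]]`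
(indices reindexed to `Fin (2^k)`). -/
noncomputable def Gmat : (k : ℕ) → Matrix (Fin (2 ^ k)) (Fin (2 ^ k)) (ZMod 2)
  | 0 => 1
  | k + 1 =>
      Matrix.reindex (finProdFinEquiv.trans (finCongr (by ring)))
        (finProdFinEquiv.trans (finCongr (by ring)))
        ((!![1, 0; 1, 1] : Matrix (Fin 2) (Fin 2) (ZMod 2)) ⊗ₖ Gmat k)

noncomputable def phi (x : ℝ) : ℝ := -(x * Real.logb 2 x)

lemma phi_zero : phi 0 = 0 := by simp [phi]

lemma phi_mul (a b : ℝ) : phi (a * b) = b * phi a + a * phi b := by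
  rcases eq_or_ne a 0 with h | h
  · simp [phi, h]
  rcases eq_or_ne b 0 with h' | h'
  · simp [phi, h']
  unfold phi
  rw [Real.logb_mul h h']
  ring

lemma ent_def {Ω α : Type*} [Fintype Ω] [Fintype α] [DecidableEq α]
    (p : Ω → ℝ) (X : Ω → α) : ent p X = ∑ a, phi (margin p X a) := rfl

lemma margin_nonneg {Ω α : Type*} [Fintype Ω] [Fintype α] [DecidableEq α]
    {p : Ω → ℝ} (hp : ∀ ω, 0 ≤ p ω) (X : Ω → α) (a : α) : 0 ≤ margin p X a := by
  refine Finset.sum_nonneg fun ω _ => ?_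
  split <;> simp [hp ω]

lemma margin_margin {Ω α β : Type*} [Fintype Ω] [Fintype α] [DecidableEq α]
    [Fintype β] [DecidableEq β] (p : Ω → ℝ) (F : Ω → α) (X : α → β) :
    margin (margin p F) X = margin p (fun ω => X (F ω)) := by
  funext b
  unfold margin
  calc (∑ a : α, if X a = b then ∑ ω : Ω, if F ω = a then p ω else 0 else 0)
      = ∑ a : α, ∑ ω : Ω, (if F ω = a then (if X a = b then p ω else 0) else 0) := by
        refine Finset.sum_congr rfl fun a _ => ?_
        split
        · rfl
        · simp
    _ = ∑ ω : Ω, ∑ a : α, (if F ω = a then (if X a = b then p ω else 0) else 0) :=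
        Finset.sum_comm
    _ = ∑ ω : Ω, (if X (F ω) = b then p ω else 0) := by
        refine Finset.sum_congr rfl fun ω _ => ?_
        rw [Finset.sum_ite_eq]
        simp

lemma ent_map {Ω α β : Type*} [Fintype Ω] [Fintype α] [DecidableEq α]
    [Fintype β] [DecidableEq β] (p : Ω → ℝ) (F : Ω → α) (X : α → β) :
    ent p (fun ω => X (F ω)) = ent (margin p F) X := by
  unfold ent
  rw [margin_margin]

lemma condEnt_map {Ω α β γ : Type*} [Fintype Ω] [Fintype α] [DecidableEq α]
    [Fintype β] [DecidableEq β] [Fintype γ] [DecidableEq γ]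
    (p : Ω → ℝ) (F : Ω → α) (X : α → β) (Y : α → γ) :
    condEnt p (fun ω => X (F ω)) (fun ω => Y (F ω)) = condEnt (margin p F) X Y := by
  unfold condEnt
  rw [← ent_map p F Y, ← ent_map p F (fun a => (X a, Y a))]

lemma mutInfo_map {Ω α β γ : Type*} [Fintype Ω] [Fintype α] [DecidableEq α]
    [Fintype β] [DecidableEq β] [Fintype γ] [DecidableEq γ]
    (p : Ω → ℝ) (F : Ω → α) (X : α → β) (Y : α → γ) :
    mutInfo p (fun ω => X (F ω)) (fun ω => Y (F ω)) = mutInfo (margin p F) X Y := by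
  unfold mutInfo
  rw [← ent_map p F Y, ← ent_map p F X, ← ent_map p F (fun a => (X a, Y a))]

lemma margin_inj_apply {Ω α β : Type*} [Fintype Ω] [Fintype α] [DecidableEq α]
    [Fintype β] [DecidableEq β] (p : Ω → ℝ) (X : Ω → α) {g : α → β}
    (hg : Function.Injective g) (a : α) :
    margin p (fun ω => g (X ω)) (g a) = margin p X a := by
  unfold margin
  refine Finset.sum_congr rfl fun ω _ => ?_
  simp [hg.eq_iff]

lemma ent_inj {Ω α β : Type*} [Fintype Ω] [Fintype α] [DecidableEq α]
    [Fintype β] [DecidableEq β] (p : Ω → ℝ) (X : Ω → α) {g : α → β}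
    (hg : Function.Injective g) :
    ent p (fun ω => g (X ω)) = ent p X := by
  rw [ent_def, ent_def]
  rw [← Finset.sum_subset (Finset.subset_univ ((Finset.univ : Finset α).image g))]
  · rw [Finset.sum_image (fun a _ a' _ h => hg h)]
    exact Finset.sum_congr rfl fun a _ => by rw [margin_inj_apply p X hg a]
  · intro b _ hb
    have h0 : margin p (fun ω => g (X ω)) b = 0 := by
      refine Finset.sum_eq_zero fun ω _ => ?_
      have : g (X ω) ≠ b := fun h => hb (by simpa [← h] using Finset.mem_image_of_mem g (Finset.mem_univ (X ω)))
      simp [this]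
    simp [h0, phi]

lemma condEnt_inj {Ω α β γ : Type*} [Fintype Ω] [Fintype α] [DecidableEq α]
    [Fintype β] [DecidableEq β] [Fintype γ] [DecidableEq γ]
    (p : Ω → ℝ) (X : Ω → α) (B : Ω → β) {g : β → γ}
    (hg : Function.Injective g) :
    condEnt p X (fun ω => g (B ω)) = condEnt p X B := by
  unfold condEnt
  rw [ent_inj p B hg]
  have h2 : Function.Injective (fun ab : α × β => (ab.1, g ab.2)) := by
    intro a b h
    simpa [Prod.ext_iff, hg.eq_iff] using h
  have := ent_inj p (fun ω => (X ω, B ω)) h2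
  simpa using this

noncomputable def condP {Ω σ : Type*} [Fintype Ω] [Fintype σ] [DecidableEq σ]
    (p : Ω → ℝ) (S : Ω → σ) (s : σ) : Ω → ℝ :=
  fun ω => if S ω = s then p ω / margin p S s else 0

lemma condP_nonneg {Ω σ : Type*} [Fintype Ω] [Fintype σ] [DecidableEq σ]
    {p : Ω → ℝ} (hp : ∀ ω, 0 ≤ p ω) (S : Ω → σ) (s : σ) (ω : Ω) :
    0 ≤ condP p S s ω := by
  unfold condP
  split
  · exact div_nonneg (hp ω) (margin_nonneg hp S s)
  · exact le_refl 0

lemma sum_condP {Ω σ : Type*} [Fintype Ω] [Fintype σ] [DecidableEq σ]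
    (p : Ω → ℝ) (S : Ω → σ) (s : σ) :
    ∑ ω, condP p S s ω = margin p S s / margin p S s := by
  unfold condP
  have : ∀ ω, (if S ω = s then p ω / margin p S s else 0)
      = (if S ω = s then p ω else 0) / margin p S s := fun ω => by split <;> simp
  simp only [this]
  rw [← Finset.sum_div]
  rfl

lemma margin_zero_of_group {Ω σ : Type*} [Fintype Ω] [Fintype σ] [DecidableEq σ]
    {p : Ω → ℝ} (hp : ∀ ω, 0 ≤ p ω) {S : Ω → σ} {s : σ}
    (h : margin p S s = 0) {ω : Ω} (hω : S ω = s) : p ω = 0 := by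
  have := (Finset.sum_eq_zero_iff_of_nonneg (fun ω _ => by
    split <;> simp [hp ω] : ∀ ω ∈ Finset.univ, 0 ≤ if S ω = s then p ω else 0)).1 h ω (Finset.mem_univ ω)
  simpa [hω] using this

lemma margin_pair_eq {Ω σ β : Type*} [Fintype Ω] [Fintype σ] [DecidableEq σ]
    [Fintype β] [DecidableEq β] {p : Ω → ℝ} (hp : ∀ ω, 0 ≤ p ω)
    (S : Ω → σ) (Wv : Ω → β) (s : σ) (w : β) :
    margin p (fun ω => (S ω, Wv ω)) (s, w) = margin p S s * margin (condP p S s) Wv w := by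
  rcases eq_or_ne (margin p S s) 0 with h | h
  · rw [h, zero_mul]
    refine Finset.sum_eq_zero fun ω _ => ?_
    split
    · next heq => exact margin_zero_of_group hp h (congrArg Prod.fst heq)
    · rfl
  · have key : ∀ ω, (if (S ω, Wv ω) = (s, w) then p ω else 0)
        = margin p S s * (if Wv ω = w then condP p S s ω else 0) := by
      intro ω
      unfold condP
      by_cases h1 : S ω = s
      · by_cases h2 : Wv ω = w
        · simp only [h1, h2, Prod.mk.injEq, and_self, if_true, ite_true]
          rw [mul_comm, div_mul_cancel₀ _ h]
        · simp [h1, h2]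
      · simp [h1]
    show (∑ ω, if (S ω, Wv ω) = (s, w) then p ω else 0) = _
    simp only [key]
    rw [← Finset.mul_sum]
    rfl

lemma sum_margin {Ω α : Type*} [Fintype Ω] [Fintype α] [DecidableEq α]
    (q : Ω → ℝ) (X : Ω → α) : ∑ a, margin q X a = ∑ ω, q ω := by
  unfold margin
  rw [Finset.sum_comm]
  refine Finset.sum_congr rfl fun ω _ => ?_
  rw [Finset.sum_ite_eq]
  simp

lemma ent_pair_group {Ω σ β : Type*} [Fintype Ω] [Fintype σ] [DecidableEq σ]
    [Fintype β] [DecidableEq β] {p : Ω → ℝ} (hp : ∀ ω, 0 ≤ p ω)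
    (S : Ω → σ) (Wv : Ω → β) :
    ent p (fun ω => (S ω, Wv ω)) = ent p S + ∑ s, margin p S s * ent (condP p S s) Wv := by
  rw [ent_def, ent_def, Fintype.sum_prod_type]
  have key : ∀ s, (∑ w, phi (margin p (fun ω => (S ω, Wv ω)) (s, w)))
      = phi (margin p S s) + margin p S s * ent (condP p S s) Wv := by
    intro s
    rcases eq_or_ne (margin p S s) 0 with h | h
    · have hz : ∀ w, margin p (fun ω => (S ω, Wv ω)) (s, w) = 0 := fun w => by
        rw [margin_pair_eq hp, h, zero_mul]
      simp [hz, h, phi_zero]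
    · have hsum : ∑ w, margin (condP p S s) Wv w = 1 := by
        rw [sum_margin, sum_condP]
        exact div_self h
      calc (∑ w, phi (margin p (fun ω => (S ω, Wv ω)) (s, w)))
          = ∑ w, (margin (condP p S s) Wv w * phi (margin p S s)
              + margin p S s * phi (margin (condP p S s) Wv w)) := by
            refine Finset.sum_congr rfl fun w _ => ?_
            rw [margin_pair_eq hp, phi_mul]
        _ = phi (margin p S s) + margin p S s * ent (condP p S s) Wv := by
            rw [Finset.sum_add_distrib, ← Finset.sum_mul, hsum, one_mul, ← Finset.mul_sum,
              ent_def]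
  rw [Finset.sum_congr rfl fun s _ => key s, Finset.sum_add_distrib]

lemma condEnt_group {Ω τ σ β : Type*} [Fintype Ω] [Fintype τ] [DecidableEq τ]
    [Fintype σ] [DecidableEq σ] [Fintype β] [DecidableEq β]
    {p : Ω → ℝ} (hp : ∀ ω, 0 ≤ p ω) (T : Ω → τ) (S : Ω → σ) (Y : Ω → β) :
    condEnt p T (fun ω => (S ω, Y ω)) =
      ∑ s, margin p S s *
        (ent (condP p S s) (fun ω => (T ω, Y ω)) - ent (condP p S s) Y) := by
  unfold condEnt
  have h1 : ent p (fun ω => (T ω, (S ω, Y ω)))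
      = ent p S + ∑ s, margin p S s * ent (condP p S s) (fun ω => (T ω, Y ω)) := by
    rw [← ent_pair_group hp S (fun ω => (T ω, Y ω))]
    have hg : Function.Injective (fun a : σ × (τ × β) => (a.2.1, (a.1, a.2.2))) := by
      intro x y hxy
      simp only [Prod.ext_iff] at hxy ⊢
      tauto
    have := ent_inj p (fun ω => (S ω, (T ω, Y ω))) hg
    simpa using this
  have h2 := ent_pair_group hp S Y
  rw [h1, h2]
  rw [Finset.sum_congr rfl (fun s _ => mul_sub (margin p S s) _ _), Finset.sum_sub_distrib]
  ring

lemma SL {τ σ 𝒴 𝒵 : Type} [Fintype τ] [DecidableEq τ] [Fintype σ] [DecidableEq σ]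
    [Fintype 𝒴] [DecidableEq 𝒴] [Fintype 𝒵] [DecidableEq 𝒵]
    (W : ZMod 2 → 𝒴 → ℝ) (hW0 : ∀ x y, 0 ≤ W x y) (hW1 : ∀ x, ∑ y, W x y = 1)
    (V : ZMod 2 → 𝒵 → ℝ) (hV0 : ∀ x z, 0 ≤ V x z) (hV1 : ∀ x, ∑ z, V x z = 1)
    (hLN : ∀ (ζ : Type) [Fintype ζ] [DecidableEq ζ] (r : ζ × ZMod 2 → ℝ), IsPMF r →
      mutInfo
          (fun w : ζ × ZMod 2 × 𝒴 × 𝒵 => r (w.1, w.2.1) * W w.2.1 w.2.2.1 * V w.2.1 w.2.2.2)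
          (fun w => w.1) (fun w => w.2.2.1) ≥
        mutInfo
          (fun w : ζ × ZMod 2 × 𝒴 × 𝒵 => r (w.1, w.2.1) * W w.2.1 w.2.2.1 * V w.2.1 w.2.2.2)
          (fun w => w.1) (fun w => w.2.2.2))
    (m : τ → σ → ZMod 2 → ℝ) (hm0 : ∀ t s x, 0 ≤ m t s x)
    (q : τ × σ × ZMod 2 × 𝒴 × 𝒵 → ℝ)
    (hq : q = fun w => m w.1 w.2.1 w.2.2.1 * W w.2.2.1 w.2.2.2.1 * V w.2.2.1 w.2.2.2.2) :
    condEnt q (fun w => w.1) (fun w => (w.2.1, w.2.2.2.1)) ≤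
      condEnt q (fun w => w.1) (fun w => (w.2.1, w.2.2.2.2)) := by
  have hq0 : ∀ w, 0 ≤ q w := by
    intro w
    rw [hq]
    exact mul_nonneg (mul_nonneg (hm0 _ _ _) (hW0 _ _)) (hV0 _ _)
  rw [condEnt_group hq0 (fun w => w.1) (fun w => w.2.1) (fun w => w.2.2.2.1),
    condEnt_group hq0 (fun w => w.1) (fun w => w.2.1) (fun w => w.2.2.2.2)]
  refine Finset.sum_le_sum fun s _ => ?_
  set S : τ × σ × ZMod 2 × 𝒴 × 𝒵 → σ := fun w => w.2.1 with hS
  rcases eq_or_ne (margin q S s) 0 with h | h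
  · rw [h]
    simp
  have hPpos : 0 < margin q S s := lt_of_le_of_ne (margin_nonneg hq0 S s) (Ne.symm h)
  refine mul_le_mul_of_nonneg_left ?_ (le_of_lt hPpos)
  -- per-s inequality via hLN
  set G : τ × σ × ZMod 2 × 𝒴 × 𝒵 → τ × ZMod 2 × 𝒴 × 𝒵 := fun w => (w.1, w.2.2) with hG
  set r : τ × ZMod 2 → ℝ := fun tx => m tx.1 s tx.2 / margin q S s with hr
  have hPs : margin q S s = ∑ tx : τ × ZMod 2, m tx.1 s tx.2 := by
    show (∑ w : τ × σ × ZMod 2 × 𝒴 × 𝒵, if w.2.1 = s then q w else 0) = _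
    rw [hq]
    simp only [Fintype.sum_prod_type]
    refine Finset.sum_congr rfl fun t _ => ?_
    have step : ∀ s' : σ, (∑ x : ZMod 2, ∑ y : 𝒴, ∑ z : 𝒵,
        if s' = s then m t s' x * W x y * V x z else 0)
        = if s' = s then ∑ x : ZMod 2, ∑ y : 𝒴, ∑ z : 𝒵, m t s' x * W x y * V x z else 0 :=
      fun s' => by split <;> simp
    rw [Finset.sum_congr rfl fun s' _ => step s', Finset.sum_ite_eq' Finset.univ s,
      if_pos (Finset.mem_univ s)]
    refine Finset.sum_congr rfl fun x _ => ?_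
    simp only [mul_assoc, ← Finset.mul_sum]
    rw [hV1]
    simp [hW1]
  have hmarg : margin (condP q S s) G
      = fun v : τ × ZMod 2 × 𝒴 × 𝒵 => r (v.1, v.2.1) * W v.2.1 v.2.2.1 * V v.2.1 v.2.2.2 := by
    funext v
    obtain ⟨t, x, y, z⟩ := v
    have hzero : ∀ w : τ × σ × ZMod 2 × 𝒴 × 𝒵, w ≠ (t, s, x, y, z) →
        (if G w = (t, x, y, z) then condP q S s w else 0) = 0 := by
      intro w hw
      by_cases hgw : G w = (t, x, y, z)
      · rw [if_pos hgw]
        obtain ⟨t', s', x', y', z'⟩ := w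
        simp only [hG, Prod.mk.injEq] at hgw
        have hs' : s' ≠ s := by
          intro hss
          apply hw
          simp only [Prod.mk.injEq]
          tauto
        simp [condP, hS, hs']
      · rw [if_neg hgw]
    show (∑ w : τ × σ × ZMod 2 × 𝒴 × 𝒵,
        if G w = (t, x, y, z) then condP q S s w else 0) = _
    rw [Finset.sum_eq_single (t, s, x, y, z) (fun w _ hw => hzero w hw)
      (fun hmem => absurd (Finset.mem_univ _) hmem)]
    have hGt : G (t, s, x, y, z) = (t, x, y, z) := by simp [hG]
    rw [if_pos hGt]
    simp only [condP, hS, hq, hr, if_pos rfl]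
    simp only [if_pos trivial]
    ring
  have hrPMF : IsPMF r := by
    constructor
    · intro tx
      exact div_nonneg (hm0 _ _ _) hPpos.le
    · rw [hr]
      simp only
      rw [← Finset.sum_div, ← hPs, div_self h]
  have hmain := hLN τ r hrPMF
  rw [← hmarg] at hmain
  have eY := mutInfo_map (condP q S s) G (fun v => v.1) (fun v => v.2.2.1)
  have eZ := mutInfo_map (condP q S s) G (fun v => v.1) (fun v => v.2.2.2)
  simp only [hG] at eY eZ
  rw [← eY, ← eZ] at hmain
  unfold mutInfo at hmain
  have h1 : ent (condP q S s) (fun w => ((fun w : τ × σ × ZMod 2 × 𝒴 × 𝒵 => w.1) w, (fun w : τ × σ × ZMod 2 × 𝒴 × 𝒵 => w.2.2.2.1) w))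
      = ent (condP q S s) (fun w => (w.1, w.2.2.2.1)) := rfl
  linarith [hmain]

lemma FL {n : ℕ} {𝒴 𝒵 τ σ : Type} [Fintype 𝒴] [DecidableEq 𝒴] [Fintype 𝒵] [DecidableEq 𝒵]
    [Fintype τ] [DecidableEq τ] [Fintype σ] [DecidableEq σ]
    (pX : ZMod 2 → ℝ) (hpX0 : ∀ x, 0 ≤ pX x)
    (W : ZMod 2 → 𝒴 → ℝ) (hW0 : ∀ x y, 0 ≤ W x y) (hW1 : ∀ x, ∑ y, W x y = 1)
    (V : ZMod 2 → 𝒵 → ℝ) (hV0 : ∀ x z, 0 ≤ V x z) (hV1 : ∀ x, ∑ z, V x z = 1)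
    (p : (Fin n → ZMod 2 × 𝒴 × 𝒵) → ℝ)
    (hp : p = fun ω => ∏ i, pX (ω i).1 * W (ω i).1 (ω i).2.1 * V (ω i).1 (ω i).2.2)
    (j : Fin n) (T : (Fin n → ZMod 2 × 𝒴 × 𝒵) → τ) (S : (Fin n → ZMod 2 × 𝒴 × 𝒵) → σ)
    (hT : ∀ ω (v : 𝒴 × 𝒵), T (Function.update ω j ((ω j).1, v)) = T ω)
    (hS : ∀ ω (v : 𝒴 × 𝒵), S (Function.update ω j ((ω j).1, v)) = S ω) :
    ∃ m : τ → σ → ZMod 2 → ℝ, (∀ t s x, 0 ≤ m t s x) ∧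
      margin p (fun ω => (T ω, S ω, (ω j).1, (ω j).2.1, (ω j).2.2)) =
        fun w => m w.1 w.2.1 w.2.2.1 * W w.2.2.1 w.2.2.2.1 * V w.2.2.1 w.2.2.2.2 := by
  have hp0 : ∀ ω, 0 ≤ p ω := by
    intro ω
    rw [hp]
    exact Finset.prod_nonneg fun i _ =>
      mul_nonneg (mul_nonneg (hpX0 _) (hW0 _ _)) (hV0 _ _)
  set Φ : (Fin n → ZMod 2 × 𝒴 × 𝒵) → τ × σ × ZMod 2 × 𝒴 × 𝒵 :=
    fun ω => (T ω, S ω, (ω j).1, (ω j).2.1, (ω j).2.2) with hΦ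
  -- key: p of an update
  have hpupd : ∀ (ω : Fin n → ZMod 2 × 𝒴 × 𝒵) (x : ZMod 2) (y y' : 𝒴) (z z' : 𝒵),
      ω j = (x, y, z) →
      p (Function.update ω j (x, y', z')) * (W x y * V x z)
        = p ω * (W x y' * V x z') := by
    intro ω x y y' z z' hω
    have hfun : (fun i => pX ((Function.update ω j (x, y', z') : Fin n → ZMod 2 × 𝒴 × 𝒵) i).1
          * W ((Function.update ω j (x, y', z') : Fin n → ZMod 2 × 𝒴 × 𝒵) i).1
              ((Function.update ω j (x, y', z') : Fin n → ZMod 2 × 𝒴 × 𝒵) i).2.1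
          * V ((Function.update ω j (x, y', z') : Fin n → ZMod 2 × 𝒴 × 𝒵) i).1
              ((Function.update ω j (x, y', z') : Fin n → ZMod 2 × 𝒴 × 𝒵) i).2.2)
        = Function.update (fun i => pX (ω i).1 * W (ω i).1 (ω i).2.1 * V (ω i).1 (ω i).2.2) j
            (pX x * W x y' * V x z') := by
      funext i
      by_cases hij : i = j
      · subst hij
        simp [Function.update_self]
      · simp [Function.update_of_ne hij]
    rw [hp]
    simp only [hfun]
    rw [Finset.prod_update_of_mem (Finset.mem_univ j)]
    rw [← Finset.mul_prod_erase Finset.univ _ (Finset.mem_univ j), hω]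
    have : Finset.univ \ {j} = Finset.univ.erase j := by
      rw [Finset.erase_eq]
    rw [this]
    ring
  have hmem : ∀ (ω : Fin n → ZMod 2 × 𝒴 × 𝒵) t s x y z,
      Φ ω = (t, s, x, y, z) ↔ T ω = t ∧ S ω = s ∧ ω j = (x, y, z) := by
    intro ω t s x y z
    rw [hΦ]
    simp only [Prod.ext_iff]
  have hmove : ∀ (ω : Fin n → ZMod 2 × 𝒴 × 𝒵) x y z y' z', ω j = (x, y, z) →
      Φ (Function.update ω j (x, y', z')) = (T ω, S ω, x, y', z') := by
    intro ω x y z y' z' hj'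
    have hc : ((x : ZMod 2), (y' , z')) = ((ω j).1, (y', z')) := by rw [hj']
    rw [hΦ]
    simp only
    rw [Function.update_self]
    have hc2 : Function.update ω j (x, y', z') = Function.update ω j ((ω j).1, (y', z')) := by
      rw [hj']
    rw [hc2, hT ω (y', z'), hS ω (y', z')]
  -- the exchange identity
  have hex : ∀ (t : τ) (s : σ) (x : ZMod 2) (y y' : 𝒴) (z z' : 𝒵),
      margin p Φ (t, s, x, y, z) * (W x y' * V x z')
        = margin p Φ (t, s, x, y', z') * (W x y * V x z) := by
    intro t s x y y' z z'
    unfold margin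
    rw [Finset.sum_mul, Finset.sum_mul]
    simp only [ite_mul, zero_mul]
    rw [Finset.sum_ite, Finset.sum_ite]
    simp only [Finset.sum_const_zero, add_zero]
    refine Finset.sum_nbij' (fun ω => Function.update ω j (x, y', z'))
      (fun ω => Function.update ω j (x, y, z)) ?_ ?_ ?_ ?_ ?_
    · intro ω hω
      simp only [Finset.mem_filter, Finset.mem_univ, true_and] at hω ⊢
      obtain ⟨h1, h2, h3⟩ := (hmem ω t s x y z).1 hω
      rw [hmove ω x y z y' z' h3, h1, h2]
    · intro ω hω
      simp only [Finset.mem_filter, Finset.mem_univ, true_and] at hω ⊢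
      obtain ⟨h1, h2, h3⟩ := (hmem ω t s x y' z').1 hω
      rw [hmove ω x y' z' y z h3, h1, h2]
    · intro ω hω
      simp only [Finset.mem_filter, Finset.mem_univ, true_and] at hω
      obtain ⟨_, _, h3⟩ := (hmem ω t s x y z).1 hω
      show Function.update (Function.update ω j (x, y', z')) j (x, y, z) = ω
      rw [Function.update_idem, ← h3, Function.update_eq_self]
    · intro ω hω
      simp only [Finset.mem_filter, Finset.mem_univ, true_and] at hω
      obtain ⟨_, _, h3⟩ := (hmem ω t s x y' z').1 hω
      show Function.update (Function.update ω j (x, y, z)) j (x, y', z') = ω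
      rw [Function.update_idem, ← h3, Function.update_eq_self]
    · intro ω hω
      simp only [Finset.mem_filter, Finset.mem_univ, true_and] at hω
      obtain ⟨_, _, h3⟩ := (hmem ω t s x y z).1 hω
      exact (hpupd ω x y y' z z' h3).symm
  refine ⟨fun t s x => ∑ yz : 𝒴 × 𝒵, margin p Φ (t, s, x, yz.1, yz.2), ?_, ?_⟩
  · intro t s x
    exact Finset.sum_nonneg fun yz _ => margin_nonneg hp0 Φ _
  · funext w
    obtain ⟨t, s, x, y, z⟩ := w
    show margin p Φ (t, s, x, y, z)
      = (∑ yz : 𝒴 × 𝒵, margin p Φ (t, s, x, yz.1, yz.2)) * W x y * V x z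
    have h1 : (∑ yz : 𝒴 × 𝒵, margin p Φ (t, s, x, yz.1, yz.2)) * W x y * V x z
        = ∑ yz : 𝒴 × 𝒵, margin p Φ (t, s, x, yz.1, yz.2) * (W x y * V x z) := by
      rw [Finset.sum_mul, Finset.sum_mul]
      exact Finset.sum_congr rfl fun yz _ => by ring
    rw [h1, Finset.sum_congr rfl fun yz _ => (hex t s x y yz.1 z yz.2).symm, ← Finset.mul_sum]
    rw [show (∑ yz : 𝒴 × 𝒵, W x yz.1 * V x yz.2) = 1 by
      rw [Fintype.sum_prod_type]
      simp only [← Finset.mul_sum, hV1, mul_one]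
      exact hW1 x]
    rw [mul_one]

def Obs {n : ℕ} {𝒴 𝒵 : Type} (c : Fin n → Bool) (ω : Fin n → ZMod 2 × 𝒴 × 𝒵) :
    Fin n → 𝒴 ⊕ 𝒵 :=
  fun i => if c i then Sum.inl (ω i).2.1 else Sum.inr (ω i).2.2

lemma FLIP {n : ℕ} {𝒴 𝒵 τ σ₀ : Type} [Fintype 𝒴] [DecidableEq 𝒴] [Fintype 𝒵] [DecidableEq 𝒵]
    [Fintype τ] [DecidableEq τ] [Fintype σ₀] [DecidableEq σ₀]
    (pX : ZMod 2 → ℝ) (hpX0 : ∀ x, 0 ≤ pX x)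
    (W : ZMod 2 → 𝒴 → ℝ) (hW0 : ∀ x y, 0 ≤ W x y) (hW1 : ∀ x, ∑ y, W x y = 1)
    (V : ZMod 2 → 𝒵 → ℝ) (hV0 : ∀ x z, 0 ≤ V x z) (hV1 : ∀ x, ∑ z, V x z = 1)
    (hLN : ∀ (ζ : Type) [Fintype ζ] [DecidableEq ζ] (r : ζ × ZMod 2 → ℝ), IsPMF r →
      mutInfo
          (fun w : ζ × ZMod 2 × 𝒴 × 𝒵 => r (w.1, w.2.1) * W w.2.1 w.2.2.1 * V w.2.1 w.2.2.2)
          (fun w => w.1) (fun w => w.2.2.1) ≥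
        mutInfo
          (fun w : ζ × ZMod 2 × 𝒴 × 𝒵 => r (w.1, w.2.1) * W w.2.1 w.2.2.1 * V w.2.1 w.2.2.2)
          (fun w => w.1) (fun w => w.2.2.2))
    (p : (Fin n → ZMod 2 × 𝒴 × 𝒵) → ℝ)
    (hp : p = fun ω => ∏ i, pX (ω i).1 * W (ω i).1 (ω i).2.1 * V (ω i).1 (ω i).2.2)
    (T : (Fin n → ZMod 2 × 𝒴 × 𝒵) → τ) (S0 : (Fin n → ZMod 2 × 𝒴 × 𝒵) → σ₀)
    (hT : ∀ ω ω', (∀ i, (ω i).1 = (ω' i).1) → T ω = T ω')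
    (hS0 : ∀ ω ω', (∀ i, (ω i).1 = (ω' i).1) → S0 ω = S0 ω')
    (c : Fin n → Bool) (j : Fin n) (hcj : c j = false) :
    condEnt p T (fun ω => (S0 ω, Obs (Function.update c j true) ω)) ≤
      condEnt p T (fun ω => (S0 ω, Obs c ω)) := by
  haveI hde : DecidableEq ({i : Fin n // i ≠ j} → 𝒴 ⊕ 𝒵) := inferInstance
  set Off : (Fin n → ZMod 2 × 𝒴 × 𝒵) → ({i : Fin n // i ≠ j} → 𝒴 ⊕ 𝒵) :=
    fun ω i => if c i.1 then Sum.inl (ω i.1).2.1 else Sum.inr (ω i.1).2.2 with hOffdef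
  set Stot : (Fin n → ZMod 2 × 𝒴 × 𝒵) → σ₀ × ({i : Fin n // i ≠ j} → 𝒴 ⊕ 𝒵) :=
    fun ω => (S0 ω, Off ω) with hStotdef
  have hTx : ∀ (ω : Fin n → ZMod 2 × 𝒴 × 𝒵) (v : 𝒴 × 𝒵),
      T (Function.update ω j ((ω j).1, v)) = T ω := by
    intro ω v
    refine hT _ _ fun i => ?_
    by_cases h : i = j
    · subst h
      rw [Function.update_self]
    · rw [Function.update_of_ne h]
  have hStotx : ∀ (ω : Fin n → ZMod 2 × 𝒴 × 𝒵) (v : 𝒴 × 𝒵),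
      Stot (Function.update ω j ((ω j).1, v)) = Stot ω := by
    intro ω v
    rw [hStotdef]
    simp only
    congr 1
    · refine hS0 _ _ fun i => ?_
      by_cases h : i = j
      · subst h
        rw [Function.update_self]
      · rw [Function.update_of_ne h]
    · funext i
      rw [hOffdef]
      simp only
      rw [Function.update_of_ne i.2]
  obtain ⟨m, hm0, hmargin⟩ := FL pX hpX0 W hW0 hW1 V hV0 hV1 p hp j T Stot hTx hStotx
  have hsl := SL W hW0 hW1 V hV0 hV1 hLN m hm0
    (margin p (fun ω => (T ω, Stot ω, (ω j).1, (ω j).2.1, (ω j).2.2))) hmargin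
  have hY := condEnt_map p (fun ω => (T ω, Stot ω, (ω j).1, (ω j).2.1, (ω j).2.2))
    (fun w => w.1) (fun w => (w.2.1, w.2.2.2.1))
  have hZ := condEnt_map p (fun ω => (T ω, Stot ω, (ω j).1, (ω j).2.1, (ω j).2.2))
    (fun w => w.1) (fun w => (w.2.1, w.2.2.2.2))
  simp only at hY hZ
  rw [← hY, ← hZ] at hsl
  -- relate the two sides to (Stot, Y_j) and (Stot, Z_j)
  have gYinj : Function.Injective
      (fun a : (σ₀ × ({i : Fin n // i ≠ j} → 𝒴 ⊕ 𝒵)) × 𝒴 =>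
        ((a.1.1, fun i : Fin n => if h : i = j then Sum.inl a.2 else a.1.2 ⟨i, h⟩) :
          σ₀ × (Fin n → 𝒴 ⊕ 𝒵))) := by
    rintro ⟨⟨a1, a2⟩, a3⟩ ⟨⟨b1, b2⟩, b3⟩ hab
    obtain ⟨h1, h2⟩ := Prod.ext_iff.1 hab
    simp only at h1 h2
    have h3 : a3 = b3 := by
      have := congrFun h2 j
      rw [dif_pos rfl, dif_pos rfl] at this
      exact Sum.inl.inj this
    have h4 : a2 = b2 := by
      funext i
      have := congrFun h2 i.1
      rw [dif_neg i.2, dif_neg i.2] at this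
      rw [show (⟨i.1, i.2⟩ : {i : Fin n // i ≠ j}) = i from rfl] at this
      exact this
    simp [h1, h3, h4]
  have gZinj : Function.Injective
      (fun a : (σ₀ × ({i : Fin n // i ≠ j} → 𝒴 ⊕ 𝒵)) × 𝒵 =>
        ((a.1.1, fun i : Fin n => if h : i = j then Sum.inr a.2 else a.1.2 ⟨i, h⟩) :
          σ₀ × (Fin n → 𝒴 ⊕ 𝒵))) := by
    rintro ⟨⟨a1, a2⟩, a3⟩ ⟨⟨b1, b2⟩, b3⟩ hab
    obtain ⟨h1, h2⟩ := Prod.ext_iff.1 hab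
    simp only at h1 h2
    have h3 : a3 = b3 := by
      have := congrFun h2 j
      rw [dif_pos rfl, dif_pos rfl] at this
      exact Sum.inr.inj this
    have h4 : a2 = b2 := by
      funext i
      have := congrFun h2 i.1
      rw [dif_neg i.2, dif_neg i.2] at this
      rw [show (⟨i.1, i.2⟩ : {i : Fin n // i ≠ j}) = i from rfl] at this
      exact this
    simp [h1, h3, h4]
  have hsideY : (fun ω => (S0 ω, Obs (Function.update c j true) ω))
      = fun ω => ((fun a : (σ₀ × ({i : Fin n // i ≠ j} → 𝒴 ⊕ 𝒵)) × 𝒴 =>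
          ((a.1.1, fun i : Fin n => if h : i = j then Sum.inl a.2 else a.1.2 ⟨i, h⟩) :
            σ₀ × (Fin n → 𝒴 ⊕ 𝒵)))
        ((Stot ω, (ω j).2.1))) := by
    funext ω
    refine Prod.ext rfl ?_
    funext i
    show Obs (Function.update c j true) ω i
      = if h : i = j then Sum.inl (ω j).2.1 else Off ω ⟨i, h⟩
    unfold Obs
    by_cases h : i = j
    · subst h
      rw [dif_pos rfl, Function.update_self]
      simp
    · rw [dif_neg h, Function.update_of_ne h]
  have hsideZ : (fun ω => (S0 ω, Obs c ω))
      = fun ω => ((fun a : (σ₀ × ({i : Fin n // i ≠ j} → 𝒴 ⊕ 𝒵)) × 𝒵 =>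
          ((a.1.1, fun i : Fin n => if h : i = j then Sum.inr a.2 else a.1.2 ⟨i, h⟩) :
            σ₀ × (Fin n → 𝒴 ⊕ 𝒵)))
        ((Stot ω, (ω j).2.2))) := by
    funext ω
    refine Prod.ext rfl ?_
    funext i
    show Obs c ω i = if h : i = j then Sum.inr (ω j).2.2 else Off ω ⟨i, h⟩
    unfold Obs
    by_cases h : i = j
    · subst h
      rw [dif_pos rfl, hcj]
      simp
    · rw [dif_neg h]
  rw [hsideY, hsideZ, condEnt_inj p T _ gYinj, condEnt_inj p T _ gZinj]
  exact hsl

lemma chain {n : ℕ} {𝒴 𝒵 τ σ₀ : Type} [Fintype 𝒴] [DecidableEq 𝒴] [Fintype 𝒵] [DecidableEq 𝒵]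
    [Fintype τ] [DecidableEq τ] [Fintype σ₀] [DecidableEq σ₀]
    (pX : ZMod 2 → ℝ) (hpX0 : ∀ x, 0 ≤ pX x)
    (W : ZMod 2 → 𝒴 → ℝ) (hW0 : ∀ x y, 0 ≤ W x y) (hW1 : ∀ x, ∑ y, W x y = 1)
    (V : ZMod 2 → 𝒵 → ℝ) (hV0 : ∀ x z, 0 ≤ V x z) (hV1 : ∀ x, ∑ z, V x z = 1)
    (hLN : ∀ (ζ : Type) [Fintype ζ] [DecidableEq ζ] (r : ζ × ZMod 2 → ℝ), IsPMF r →
      mutInfo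
          (fun w : ζ × ZMod 2 × 𝒴 × 𝒵 => r (w.1, w.2.1) * W w.2.1 w.2.2.1 * V w.2.1 w.2.2.2)
          (fun w => w.1) (fun w => w.2.2.1) ≥
        mutInfo
          (fun w : ζ × ZMod 2 × 𝒴 × 𝒵 => r (w.1, w.2.1) * W w.2.1 w.2.2.1 * V w.2.1 w.2.2.2)
          (fun w => w.1) (fun w => w.2.2.2))
    (p : (Fin n → ZMod 2 × 𝒴 × 𝒵) → ℝ)
    (hp : p = fun ω => ∏ i, pX (ω i).1 * W (ω i).1 (ω i).2.1 * V (ω i).1 (ω i).2.2)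
    (T : (Fin n → ZMod 2 × 𝒴 × 𝒵) → τ) (S0 : (Fin n → ZMod 2 × 𝒴 × 𝒵) → σ₀)
    (hT : ∀ ω ω', (∀ i, (ω i).1 = (ω' i).1) → T ω = T ω')
    (hS0 : ∀ ω ω', (∀ i, (ω i).1 = (ω' i).1) → S0 ω = S0 ω') :
    condEnt p T (fun ω => (S0 ω, Obs (fun _ => true) ω)) ≤
      condEnt p T (fun ω => (S0 ω, Obs (fun _ => false) ω)) := by
  have main : ∀ M : ℕ, M ≤ n →
      condEnt p T (fun ω => (S0 ω, Obs (fun i : Fin n => decide (i.1 < M)) ω)) ≤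
        condEnt p T (fun ω => (S0 ω, Obs (fun _ : Fin n => false) ω)) := by
    intro M
    induction M with
    | zero =>
      intro _
      have h0 : (fun i : Fin n => decide (i.1 < 0)) = fun _ : Fin n => false := by
        funext i
        simp
      rw [h0]
    | succ M ih =>
      intro hM
      have hMn : M < n := hM
      have hupd : (fun i : Fin n => decide (i.1 < M + 1))
          = Function.update (fun i : Fin n => decide (i.1 < M)) ⟨M, hMn⟩ true := by
        funext i
        by_cases h : i = (⟨M, hMn⟩ : Fin n)
        · subst h
          rw [Function.update_self]
          simp
        · rw [Function.update_of_ne h]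
          have hne : i.1 ≠ M := fun hh => h (Fin.ext hh)
          exact decide_eq_decide.mpr (by omega)
      rw [hupd]
      exact le_trans
        (FLIP pX hpX0 W hW0 hW1 V hV0 hV1 hLN p hp T S0 hT hS0
          (fun i : Fin n => decide (i.1 < M)) ⟨M, hMn⟩ (by simp))
        (ih (Nat.le_of_succ_le hM))
  have hfin := main n le_rfl
  have hall : (fun i : Fin n => decide (i.1 < n)) = fun _ : Fin n => true := by
    funext i
    simp [i.2]
  rwa [hall] at hfin

/-- Let `W : X → Y` and `V : X → Z` be discrete memoryless channels with
common (binary) input alphabet such that `W` is less noisy than `V`: for every finitely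
supported `T` jointly distributed with the input `X` (joint pmf `r`), with outputs
generated through the channels (so `T → X → (Y, Z)` is a Markov chain),
`I(T;Y) ≥ I(T;Z)`.  For i.i.d. inputs `X_1^N` (`N = 2^k`) with per-letter distribution
`pX`, independent channel uses, and `U_1^N = X_1^N · G_k` over GF(2), for every
`ε ∈ (0,1)` one has `𝒟_ε^N(X|Z) ⊆ 𝒟_ε^N(X|Y)` where
`𝒟_ε^N(X|Y) = {i : H(U_i | U_1^{i-1}, Y_1^N) ≤ ε}` and similarly for `Z`.
A point `ω` of the sample space assigns to coordinate `i` the triple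
`ω i = (x_i, y_i, z_i)`. -/
theorem statement4 {𝒴 𝒵 : Type} [Fintype 𝒴] [DecidableEq 𝒴] [Fintype 𝒵] [DecidableEq 𝒵]
    (W : ZMod 2 → 𝒴 → ℝ) (hW0 : ∀ x y, 0 ≤ W x y) (hW1 : ∀ x, ∑ y, W x y = 1)
    (V : ZMod 2 → 𝒵 → ℝ) (hV0 : ∀ x z, 0 ≤ V x z) (hV1 : ∀ x, ∑ z, V x z = 1)
    (hLN : ∀ (ζ : Type) [Fintype ζ] [DecidableEq ζ] (r : ζ × ZMod 2 → ℝ), IsPMF r →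
      mutInfo
          (fun w : ζ × ZMod 2 × 𝒴 × 𝒵 => r (w.1, w.2.1) * W w.2.1 w.2.2.1 * V w.2.1 w.2.2.2)
          (fun w => w.1) (fun w => w.2.2.1) ≥
        mutInfo
          (fun w : ζ × ZMod 2 × 𝒴 × 𝒵 => r (w.1, w.2.1) * W w.2.1 w.2.2.1 * V w.2.1 w.2.2.2)
          (fun w => w.1) (fun w => w.2.2.2))
    (pX : ZMod 2 → ℝ) (hpX : IsPMF pX)
    (k : ℕ)
    (p : (Fin (2 ^ k) → ZMod 2 × 𝒴 × 𝒵) → ℝ)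
    (hp : p = fun ω => ∏ i, pX (ω i).1 * W (ω i).1 (ω i).2.1 * V (ω i).1 (ω i).2.2)
    (U : (Fin (2 ^ k) → ZMod 2 × 𝒴 × 𝒵) → Fin (2 ^ k) → ZMod 2)
    (hU : U = fun ω => Matrix.vecMul (fun j => (ω j).1) (Gmat k)) :
    ∀ ε : ℝ, 0 < ε → ε < 1 →
      {i : Fin (2 ^ k) |
          condEnt p (fun ω => U ω i)
            (fun ω => ((fun j : Fin (i : ℕ) => U ω (Fin.castLE i.isLt.le j)),
              fun j => (ω j).2.2)) ≤ ε} ⊆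
      {i : Fin (2 ^ k) |
          condEnt p (fun ω => U ω i)
            (fun ω => ((fun j : Fin (i : ℕ) => U ω (Fin.castLE i.isLt.le j)),
              fun j => (ω j).2.1)) ≤ ε} := by
  intro ε hε0 hε1 i hi
  simp only [Set.mem_setOf_eq] at hi ⊢
  have hxdep : ∀ ω ω' : Fin (2 ^ k) → ZMod 2 × 𝒴 × 𝒵,
      (∀ m, (ω m).1 = (ω' m).1) → U ω = U ω' := by
    intro ω ω' h
    rw [hU]
    simp only
    have hv : (fun j : Fin (2 ^ k) => (ω j).1) = fun j => (ω' j).1 := funext h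
    rw [hv]
  have hTdep : ∀ ω ω' : Fin (2 ^ k) → ZMod 2 × 𝒴 × 𝒵,
      (∀ m, (ω m).1 = (ω' m).1) → U ω i = U ω' i :=
    fun ω ω' h => congrFun (hxdep ω ω' h) i
  have hS0dep : ∀ ω ω' : Fin (2 ^ k) → ZMod 2 × 𝒴 × 𝒵,
      (∀ m, (ω m).1 = (ω' m).1) →
      (fun j : Fin (i : ℕ) => U ω (Fin.castLE i.isLt.le j))
        = fun j : Fin (i : ℕ) => U ω' (Fin.castLE i.isLt.le j) :=
    fun ω ω' h => funext fun j => congrFun (hxdep ω ω' h) _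
  have glinj : Function.Injective
      (fun a : (Fin (i : ℕ) → ZMod 2) × (Fin (2 ^ k) → 𝒴) =>
        ((a.1, fun j => Sum.inl (a.2 j)) : (Fin (i : ℕ) → ZMod 2) × (Fin (2 ^ k) → 𝒴 ⊕ 𝒵))) := by
    rintro ⟨a1, a2⟩ ⟨b1, b2⟩ hab
    obtain ⟨h1, h2⟩ := Prod.ext_iff.1 hab
    simp only at h1 h2
    refine Prod.ext h1 (funext fun j => ?_)
    have := congrFun h2 j
    simpa using this
  have grinj : Function.Injective
      (fun a : (Fin (i : ℕ) → ZMod 2) × (Fin (2 ^ k) → 𝒵) =>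
        ((a.1, fun j => Sum.inr (a.2 j)) : (Fin (i : ℕ) → ZMod 2) × (Fin (2 ^ k) → 𝒴 ⊕ 𝒵))) := by
    rintro ⟨a1, a2⟩ ⟨b1, b2⟩ hab
    obtain ⟨h1, h2⟩ := Prod.ext_iff.1 hab
    simp only at h1 h2
    refine Prod.ext h1 (funext fun j => ?_)
    have := congrFun h2 j
    simpa using this
  have eY : condEnt p (fun ω => U ω i)
      (fun ω => ((fun j : Fin (i : ℕ) => U ω (Fin.castLE i.isLt.le j)),
        fun j => (ω j).2.1))
      = condEnt p (fun ω => U ω i)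
        (fun ω => ((fun j : Fin (i : ℕ) => U ω (Fin.castLE i.isLt.le j)),
          Obs (fun _ => true) ω)) := by
    rw [← condEnt_inj p (fun ω => U ω i)
      (fun ω => ((fun j : Fin (i : ℕ) => U ω (Fin.castLE i.isLt.le j)),
        fun j => (ω j).2.1)) glinj]
    refine congrArg _ (funext fun ω => ?_)
    refine Prod.ext rfl (funext fun j => ?_)
    show Sum.inl ((ω j).2.1) = Obs (fun _ => true) ω j
    unfold Obs
    simp
  have eZ : condEnt p (fun ω => U ω i)
      (fun ω => ((fun j : Fin (i : ℕ) => U ω (Fin.castLE i.isLt.le j)),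
        fun j => (ω j).2.2))
      = condEnt p (fun ω => U ω i)
        (fun ω => ((fun j : Fin (i : ℕ) => U ω (Fin.castLE i.isLt.le j)),
          Obs (fun _ => false) ω)) := by
    rw [← condEnt_inj p (fun ω => U ω i)
      (fun ω => ((fun j : Fin (i : ℕ) => U ω (Fin.castLE i.isLt.le j)),
        fun j => (ω j).2.2)) grinj]
    refine congrArg _ (funext fun ω => ?_)
    refine Prod.ext rfl (funext fun j => ?_)
    show Sum.inr ((ω j).2.2) = Obs (fun _ => false) ω j
    unfold Obs
    simp
  have hchain := chain pX hpX.1 W hW0 hW1 V hV0 hV1 hLN p hp (fun ω => U ω i)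
    (fun ω => (fun j : Fin (i : ℕ) => U ω (Fin.castLE i.isLt.le j))) hTdep hS0dep
  rw [eY]
  rw [eZ] at hi
  exact le_trans hchain hi

end JWOM
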